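/- Let (M, C, T_l, T_r, Π, t, i) be a dual admissible septuple (built from comonads) and let w : T_l X → T_r X be a transposition morphism for an object X of M. Then the operators w_n := i_{T_l^n X} ∘ (t_n^0)_X ∘ Π(T_l^n w) : Z_n → Z_n make the simplicial object Z_n := Π(T_l^{n+1} X) para-cyclic; explicitly, for every n and every 1 ≤ k ≤ n one has: d_0 ∘ w_n = d_n, d_k ∘ w_n = w_{n-1} ∘ d_{k-1}, s_0 ∘ w_n = w_{n+1} ∘ w_{n+1} ∘ s_n, and s_k ∘ w_n = w_{n+1} ∘ s_{k-1}. Moreover, if f : X → X' satisfies T_r(f) ∘ w = w' ∘ T_l(f) for transposition morphisms w, w', then Π(T_l^{n+1} f) commutes with the para-cyclic operators. -/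

import Mathlib

/-!
Statement 12: For a dual admissible septuple `(M, C, T_l, T_r, Π, t, i)` (built from
comonads) and a transposition morphism `w : T_l X ⟶ T_r X`, the operators
`w_n := i_{T_l^n X} ∘ (t_n^0)_X ∘ Π(T_l^n w)` make the simplicial object
`Z_n := Π(T_l^{n+1} X)` para-cyclic; moreover morphisms of transposition morphisms induce
morphisms of para-cyclic objects.
-/

open CategoryTheory

universe v u v' u'

namespace Stmt12

variable {M : Type u} [Category.{v} M]

/-- `fpow T n X` is the `n`-fold application `Tⁿ X`. -/
def fpow (T : M ⥤ M) : ℕ → M → M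
  | 0, X => X
  | n + 1, X => T.obj (fpow T n X)

/-- `T^n f : Tⁿ X ⟶ Tⁿ Y`. -/
def fpowMap (T : M ⥤ M) {X Y : M} (f : X ⟶ Y) : (n : ℕ) → (fpow T n X ⟶ fpow T n Y)
  | 0 => f
  | n + 1 => T.map (fpowMap T f n)

/-- The face map `d_k = Tᵏ (ε_{T^{n-k} X}) : Tⁿ⁺¹ X ⟶ Tⁿ X` (meaningful for `k ≤ n`). -/
def face (T : M ⥤ M) (e : T ⟶ 𝟭 M) (X : M) : (n k : ℕ) → (fpow T (n + 1) X ⟶ fpow T n X)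
  | n, 0 => e.app (fpow T n X)
  | n + 1, k + 1 => T.map (face T e X n k)
  | 0, _ + 1 => e.app X

/-- The degeneracy map `s_k = Tᵏ (Δ_{T^{n-k} X}) : Tⁿ⁺¹ X ⟶ Tⁿ⁺² X` (meaningful for
`k ≤ n`). -/
def deg (T : M ⥤ M) (d : T ⟶ T ⋙ T) (X : M) : (n k : ℕ) → (fpow T (n + 1) X ⟶ fpow T (n + 2) X)
  | n, 0 => d.app (fpow T n X)
  | n + 1, k + 1 => T.map (deg T d X n k)
  | 0, _ + 1 => d.app X

/-- The lifted dual distributive law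
`t_n^0 = t T_l^{n-1} ∘ ⋯ ∘ T_l^{n-1} t : T_l^n T_r X ⟶ T_r T_l^n X`. -/
def distIter (Tl Tr : M ⥤ M) (t : Tr ⋙ Tl ⟶ Tl ⋙ Tr) (X : M) :
    (n : ℕ) → (fpow Tl n (Tr.obj X) ⟶ Tr.obj (fpow Tl n X))
  | 0 => 𝟙 (Tr.obj X)
  | n + 1 => Tl.map (distIter Tl Tr t X n) ≫ t.app (fpow Tl n X)

/-- `T_l^n w : T_l^{n+1} X ⟶ T_l^n Y` for `w : T_l X ⟶ Y`. -/
def transIter (T : M ⥤ M) {X Y : M} (w : T.obj X ⟶ Y) : (n : ℕ) → (fpow T (n + 1) X ⟶ fpow T n Y)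
  | 0 => w
  | n + 1 => T.map (transIter T w n)

variable {C : Type u'} [Category.{v'} C]

/-- The para-cyclic operator `w_n := i_{T_l^n X} ∘ (t_n^0)_X ∘ Π(T_l^n w)`. -/
def paraOp (Tl Tr : M ⥤ M) (t : Tr ⋙ Tl ⟶ Tl ⋙ Tr) (P : M ⥤ C) (i : Tr ⋙ P ⟶ Tl ⋙ P)
    {X : M} (w : Tl.obj X ⟶ Tr.obj X) (n : ℕ) :
    P.obj (fpow Tl (n + 1) X) ⟶ P.obj (fpow Tl (n + 1) X) :=
  P.map (transIter Tl w n ≫ distIter Tl Tr t X n) ≫ i.app (fpow Tl n X)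

/-! ### Auxiliary material -/

lemma face_zero (T : M ⥤ M) (e : T ⟶ 𝟭 M) (X : M) (n : ℕ) :
    face T e X n 0 = e.app (fpow T n X) := by cases n <;> rfl

lemma face_succ (T : M ⥤ M) (e : T ⟶ 𝟭 M) (X : M) (n k : ℕ) :
    face T e X (n + 1) (k + 1) = T.map (face T e X n k) := rfl

lemma deg_zero (T : M ⥤ M) (d : T ⟶ T ⋙ T) (X : M) (n : ℕ) :
    deg T d X n 0 = d.app (fpow T n X) := by cases n <;> rfl

lemma deg_succ (T : M ⥤ M) (d : T ⟶ T ⋙ T) (X : M) (n k : ℕ) :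
    deg T d X (n + 1) (k + 1) = T.map (deg T d X n k) := rfl

lemma fpowMap_succ (T : M ⥤ M) {X Y : M} (f : X ⟶ Y) (n : ℕ) :
    fpowMap T f (n + 1) = T.map (fpowMap T f n) := rfl

section Aux

variable (Tl Tr : M ⥤ M) (t : Tr ⋙ Tl ⟶ Tl ⋙ Tr) {X : M}

/-- `D_n = t_n^0 ∘ T_l^n w : T_l^{n+1} X ⟶ T_r T_l^n X`. -/
def Dm (w : Tl.obj X ⟶ Tr.obj X) (n : ℕ) : fpow Tl (n + 1) X ⟶ Tr.obj (fpow Tl n X) :=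
  transIter Tl w n ≫ distIter Tl Tr t X n

variable (el : Tl ⟶ 𝟭 M) (er : Tr ⟶ 𝟭 M) (dl : Tl ⟶ Tl ⋙ Tl) (dr : Tr ⟶ Tr ⋙ Tr)
variable (w : Tl.obj X ⟶ Tr.obj X)

lemma Dm_succ (n : ℕ) :
    Dm Tl Tr t w (n + 1) = Tl.map (Dm Tl Tr t w n) ≫ t.app (fpow Tl n X) := by
  simp [Dm, transIter, distIter]
  rfl

lemma Dm_zero : Dm Tl Tr t w 0 = w := by
  show transIter Tl w 0 ≫ distIter Tl Tr t X 0 = w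
  rw [show distIter Tl Tr t X 0 = 𝟙 (Tr.obj X) from rfl]
  exact Category.comp_id w

lemma DmB (ht₃ : ∀ Y : M, t.app Y ≫ er.app (Tl.obj Y) = Tl.map (er.app Y))
    (hw₁ : w ≫ er.app X = el.app X) :
    ∀ n : ℕ, Dm Tl Tr t w n ≫ er.app (fpow Tl n X) = face Tl el X n n := by
  intro n
  induction n with
  | zero => rw [Dm_zero]; exact hw₁
  | succ n ih =>
    erw [Dm_succ, Category.assoc]
    have h : t.app (fpow Tl n X) ≫ er.app (fpow Tl (n + 1) X) =
        Tl.map (er.app (fpow Tl n X)) := ht₃ _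
    erw [h, ← Functor.map_comp, ih, face_succ]

lemma DmA (ht₄ : ∀ Y : M, t.app Y ≫ Tr.map (el.app Y) = el.app (Tr.obj Y)) :
    ∀ k n : ℕ, k ≤ n →
      Dm Tl Tr t w (n + 1) ≫ Tr.map (face Tl el X n k) =
        face Tl el X (n + 1) k ≫ Dm Tl Tr t w n := by
  intro k
  induction k with
  | zero =>
    intro n _
    erw [face_zero, face_zero, Dm_succ, Category.assoc]
    have h : t.app (fpow Tl n X) ≫ Tr.map (el.app (fpow Tl n X)) =
        el.app (Tr.obj (fpow Tl n X)) := ht₄ _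
    erw [h]
    have h2 : Tl.map (Dm Tl Tr t w n) ≫ el.app (Tr.obj (fpow Tl n X)) =
        el.app (fpow Tl (n + 1) X) ≫ Dm Tl Tr t w n := by
      simpa using el.naturality (Dm Tl Tr t w n)
    erw [h2]
    rfl
  | succ k ih =>
    intro n hk
    cases n with
    | zero => exact absurd hk (by omega)
    | succ n =>
      have hkn : k ≤ n := by omega
      erw [face_succ, face_succ, Dm_succ Tl Tr t w (n + 1), Category.assoc]
      have h : t.app (fpow Tl (n + 1) X) ≫ Tr.map (Tl.map (face Tl el X n k)) =
          Tl.map (Tr.map (face Tl el X n k)) ≫ t.app (fpow Tl n X) := by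
        simpa using (t.naturality (face Tl el X n k)).symm
      erw [h, ← Category.assoc, ← Functor.map_comp, ih n hkn, Functor.map_comp,
        Category.assoc, ← Dm_succ]
      rfl

lemma DmC (ht₂ : ∀ Y : M, t.app Y ≫ Tr.map (dl.app Y) =
      dl.app (Tr.obj Y) ≫ Tl.map (t.app Y) ≫ t.app (Tl.obj Y)) :
    ∀ k n : ℕ, k ≤ n →
      Dm Tl Tr t w (n + 1) ≫ Tr.map (deg Tl dl X n k) =
        deg Tl dl X (n + 1) k ≫ Dm Tl Tr t w (n + 2) := by
  intro k
  induction k with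
  | zero =>
    intro n _
    erw [deg_zero, deg_zero, Dm_succ, Category.assoc]
    have h : t.app (fpow Tl n X) ≫ Tr.map (dl.app (fpow Tl n X)) =
        dl.app (Tr.obj (fpow Tl n X)) ≫ Tl.map (t.app (fpow Tl n X)) ≫
          t.app (fpow Tl (n + 1) X) := ht₂ _
    erw [h]
    have h2 : Tl.map (Dm Tl Tr t w n) ≫ dl.app (Tr.obj (fpow Tl n X)) =
        dl.app (fpow Tl (n + 1) X) ≫ Tl.map (Tl.map (Dm Tl Tr t w n)) := by
      simpa using dl.naturality (Dm Tl Tr t w n)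
    erw [← Category.assoc, h2, Category.assoc,
      ← Category.assoc (Tl.map (Tl.map (Dm Tl Tr t w n))), ← Functor.map_comp,
      ← Dm_succ, ← Dm_succ]
    rfl
  | succ k ih =>
    intro n hk
    cases n with
    | zero => exact absurd hk (by omega)
    | succ n =>
      have hkn : k ≤ n := by omega
      erw [deg_succ, deg_succ, Dm_succ Tl Tr t w (n + 1), Category.assoc]
      have h : t.app (fpow Tl (n + 1) X) ≫ Tr.map (Tl.map (deg Tl dl X n k)) =
          Tl.map (Tr.map (deg Tl dl X n k)) ≫ t.app (fpow Tl (n + 2) X) := by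
        simpa using (t.naturality (deg Tl dl X n k)).symm
      erw [h, ← Category.assoc, ← Functor.map_comp, ih n hkn, Functor.map_comp,
        Category.assoc, ← Dm_succ]
      rfl

lemma DmD (ht₁ : ∀ Y : M, t.app Y ≫ dr.app (Tl.obj Y) =
      Tl.map (dr.app Y) ≫ t.app (Tr.obj Y) ≫ Tr.map (t.app Y))
    (hw₂ : w ≫ dr.app X = dl.app X ≫ Tl.map w ≫ t.app X ≫ Tr.map w) :
    ∀ n : ℕ, Dm Tl Tr t w n ≫ dr.app (fpow Tl n X) =
      deg Tl dl X n n ≫ Dm Tl Tr t w (n + 1) ≫ Tr.map (Dm Tl Tr t w n) := by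
  intro n
  induction n with
  | zero =>
    erw [deg_zero, Dm_succ, Dm_zero]
    erw [Category.assoc]
    exact hw₂
  | succ n ih =>
    have key : ∀ {Y : M} (D : Tl.obj Y ⟶ Tr.obj Y) (s : Tl.obj Y ⟶ Tl.obj (Tl.obj Y))
        (D1 : Tl.obj (Tl.obj Y) ⟶ Tr.obj (Tl.obj Y))
        (D2 : Tl.obj (Tl.obj (Tl.obj Y)) ⟶ Tr.obj (Tl.obj (Tl.obj Y))),
        D1 = Tl.map D ≫ t.app Y → D2 = Tl.map D1 ≫ t.app (Tl.obj Y) →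
        D ≫ dr.app Y = s ≫ D1 ≫ Tr.map D →
        D1 ≫ dr.app (Tl.obj Y) = Tl.map s ≫ D2 ≫ Tr.map D1 := by
      intro Y D s D1 D2 hD1 hD2 hD
      subst hD2
      subst hD1
      have h2 : Tl.map (Tr.map D) ≫ t.app (Tr.obj Y) = t.app (Tl.obj Y) ≫ Tr.map (Tl.map D) := by
        simpa using t.naturality D
      rw [Category.assoc, ht₁, ← Category.assoc (Tl.map D), ← Functor.map_comp, hD]
      simp only [Functor.map_comp, Category.assoc]
      rw [reassoc_of% h2]
    exact key (Dm Tl Tr t w n) (deg Tl dl X n n) (Dm Tl Tr t w (n + 1)) (Dm Tl Tr t w (n + 2))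
      (Dm_succ Tl Tr t w n) (Dm_succ Tl Tr t w (n + 1)) ih

lemma DmE {X' : M} (w' : Tl.obj X' ⟶ Tr.obj X') (f : X ⟶ X')
    (hf : w ≫ Tr.map f = Tl.map f ≫ w') :
    ∀ n : ℕ, fpowMap Tl f (n + 1) ≫ Dm Tl Tr t w' n =
      Dm Tl Tr t w n ≫ Tr.map (fpowMap Tl f n) := by
  intro n
  induction n with
  | zero =>
    rw [Dm_zero, Dm_zero]
    exact hf.symm
  | succ n ih =>
    erw [fpowMap_succ Tl f (n + 1), Dm_succ Tl Tr t w' n, ← Category.assoc,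
      ← Functor.map_comp, ih, Functor.map_comp, Category.assoc]
    have h : Tl.map (Tr.map (fpowMap Tl f n)) ≫ t.app (fpow Tl n X') =
        t.app (fpow Tl n X) ≫ Tr.map (Tl.map (fpowMap Tl f n)) := by
      simpa using t.naturality (fpowMap Tl f n)
    erw [h, ← Category.assoc, ← Dm_succ, fpowMap_succ]
    rfl

end Aux

theorem paracyclic_of_transposition
    (Tl Tr : M ⥤ M) (dl : Tl ⟶ Tl ⋙ Tl) (el : Tl ⟶ 𝟭 M)
    (dr : Tr ⟶ Tr ⋙ Tr) (er : Tr ⟶ 𝟭 M)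
    (P : M ⥤ C) (t : Tr ⋙ Tl ⟶ Tl ⋙ Tr) (i : Tr ⋙ P ⟶ Tl ⋙ P)
    -- `(T_l, dl, el)` is a comonad
    (hdl : ∀ X : M, dl.app X ≫ Tl.map (dl.app X) = dl.app X ≫ dl.app (Tl.obj X))
    (hel₁ : ∀ X : M, dl.app X ≫ el.app (Tl.obj X) = 𝟙 (Tl.obj X))
    (hel₂ : ∀ X : M, dl.app X ≫ Tl.map (el.app X) = 𝟙 (Tl.obj X))
    -- `(T_r, dr, er)` is a comonad
    (hdr : ∀ X : M, dr.app X ≫ Tr.map (dr.app X) = dr.app X ≫ dr.app (Tr.obj X))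
    (her₁ : ∀ X : M, dr.app X ≫ er.app (Tr.obj X) = 𝟙 (Tr.obj X))
    (her₂ : ∀ X : M, dr.app X ≫ Tr.map (er.app X) = 𝟙 (Tr.obj X))
    -- `t` is a dual distributive law
    (ht₁ : ∀ X : M, t.app X ≫ dr.app (Tl.obj X) =
      Tl.map (dr.app X) ≫ t.app (Tr.obj X) ≫ Tr.map (t.app X))
    (ht₂ : ∀ X : M, t.app X ≫ Tr.map (dl.app X) =
      dl.app (Tr.obj X) ≫ Tl.map (t.app X) ≫ t.app (Tl.obj X))
    (ht₃ : ∀ X : M, t.app X ≫ er.app (Tl.obj X) = Tl.map (er.app X))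
    (ht₄ : ∀ X : M, t.app X ≫ Tr.map (el.app X) = el.app (Tr.obj X))
    -- admissibility conditions on `i`
    (hi₁ : ∀ X : M, i.app X ≫ P.map (el.app X) = P.map (er.app X))
    (hi₂ : ∀ X : M, i.app X ≫ P.map (dl.app X) =
      P.map (dr.app X) ≫ i.app (Tr.obj X) ≫ P.map (t.app X) ≫ i.app (Tl.obj X))
    -- `w` is a transposition morphism
    (X : M) (w : Tl.obj X ⟶ Tr.obj X)
    (hw₁ : w ≫ er.app X = el.app X)
    (hw₂ : w ≫ dr.app X = dl.app X ≫ Tl.map w ≫ t.app X ≫ Tr.map w) :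
    -- `d_0 ∘ w_n = d_n`
    (∀ n : ℕ, paraOp Tl Tr t P i w n ≫ P.map (face Tl el X n 0) =
      P.map (face Tl el X n n)) ∧
    -- `d_k ∘ w_n = w_{n-1} ∘ d_{k-1}` for `1 ≤ k ≤ n`
    (∀ n k : ℕ, k ≤ n →
      paraOp Tl Tr t P i w (n + 1) ≫ P.map (face Tl el X (n + 1) (k + 1)) =
        P.map (face Tl el X (n + 1) k) ≫ paraOp Tl Tr t P i w n) ∧
    -- `s_0 ∘ w_n = w_{n+1} ∘ w_{n+1} ∘ s_n`
    (∀ n : ℕ, paraOp Tl Tr t P i w n ≫ P.map (deg Tl dl X n 0) =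
      P.map (deg Tl dl X n n) ≫ paraOp Tl Tr t P i w (n + 1) ≫
        paraOp Tl Tr t P i w (n + 1)) ∧
    -- `s_k ∘ w_n = w_{n+1} ∘ s_{k-1}` for `1 ≤ k ≤ n`
    (∀ n k : ℕ, k ≤ n →
      paraOp Tl Tr t P i w (n + 1) ≫ P.map (deg Tl dl X (n + 1) (k + 1)) =
        P.map (deg Tl dl X (n + 1) k) ≫ paraOp Tl Tr t P i w (n + 2)) ∧
    -- a morphism of transposition morphisms induces a morphism of para-cyclic objects
    (∀ (X' : M) (w' : Tl.obj X' ⟶ Tr.obj X'),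
      w' ≫ er.app X' = el.app X' →
      w' ≫ dr.app X' = dl.app X' ≫ Tl.map w' ≫ t.app X' ≫ Tr.map w' →
      ∀ f : X ⟶ X', w ≫ Tr.map f = Tl.map f ≫ w' →
      ∀ n : ℕ, P.map (fpowMap Tl f (n + 1)) ≫ paraOp Tl Tr t P i w' n =
        paraOp Tl Tr t P i w n ≫ P.map (fpowMap Tl f (n + 1))) := by
  have e1 : ∀ (X0 : M) (w0 : Tl.obj X0 ⟶ Tr.obj X0) (m : ℕ),
      paraOp Tl Tr t P i w0 m = P.map (Dm Tl Tr t w0 m) ≫ i.app (fpow Tl m X0) :=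
    fun _ _ _ => rfl
  refine ⟨?_, ?_, ?_, ?_, ?_⟩
  · -- d_0 ∘ w_n = d_n
    intro n
    erw [e1, face_zero, Category.assoc]
    have h : i.app (fpow Tl n X) ≫ P.map (el.app (fpow Tl n X)) =
        P.map (er.app (fpow Tl n X)) := hi₁ _
    erw [h, ← Functor.map_comp, DmB Tl Tr t el er w ht₃ hw₁]
  · -- d_k ∘ w_n = w_{n-1} ∘ d_{k-1}
    intro n k hk
    erw [e1, e1, face_succ, Category.assoc]
    have h : i.app (fpow Tl (n + 1) X) ≫ P.map (Tl.map (face Tl el X n k)) =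
        P.map (Tr.map (face Tl el X n k)) ≫ i.app (fpow Tl n X) := by
      simpa using (i.naturality (face Tl el X n k)).symm
    erw [h, ← Category.assoc, ← Functor.map_comp, DmA Tl Tr t el w ht₄ k n hk,
      Functor.map_comp, Category.assoc]
    rfl
  · -- s_0 ∘ w_n = w_{n+1} ∘ w_{n+1} ∘ s_n
    intro n
    rw [e1, e1, deg_zero]
    have key : ∀ {Y : M} (D : Tl.obj Y ⟶ Tr.obj Y) (s : Tl.obj Y ⟶ Tl.obj (Tl.obj Y))
        (D1 : Tl.obj (Tl.obj Y) ⟶ Tr.obj (Tl.obj Y)), D1 = Tl.map D ≫ t.app Y →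
        D ≫ dr.app Y = s ≫ D1 ≫ Tr.map D →
        (P.map D ≫ i.app Y) ≫ P.map (dl.app Y) =
          P.map s ≫ (P.map D1 ≫ i.app (Tl.obj Y)) ≫ (P.map D1 ≫ i.app (Tl.obj Y)) := by
      intro Y D s D1 hD1 hD
      subst hD1
      have h3 : P.map (Tr.map D) ≫ i.app (Tr.obj Y) = i.app (Tl.obj Y) ≫ P.map (Tl.map D) := by
        simpa using i.naturality D
      rw [Category.assoc, hi₂, ← Category.assoc (P.map D), ← Functor.map_comp, hD]
      simp only [Functor.map_comp, Category.assoc]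
      rw [reassoc_of% h3]
    exact key (Dm Tl Tr t w n) (deg Tl dl X n n) (Dm Tl Tr t w (n + 1)) (Dm_succ Tl Tr t w n)
      (DmD Tl Tr t dl dr w ht₁ hw₂ n)
  · -- s_k ∘ w_n = w_{n+1} ∘ s_{k-1}
    intro n k hk
    erw [e1, e1, deg_succ, Category.assoc]
    have h : i.app (fpow Tl (n + 1) X) ≫ P.map (Tl.map (deg Tl dl X n k)) =
        P.map (Tr.map (deg Tl dl X n k)) ≫ i.app (fpow Tl (n + 2) X) := by
      simpa using (i.naturality (deg Tl dl X n k)).symm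
    erw [h, ← Category.assoc, ← Functor.map_comp, DmC Tl Tr t dl w ht₂ k n hk,
      Functor.map_comp, Category.assoc]
    rfl
  · -- morphisms of transposition morphisms
    intro X' w' _ _ f hf n
    erw [e1, e1, ← Category.assoc, ← Functor.map_comp, DmE Tl Tr t w w' f hf n,
      Functor.map_comp, Category.assoc]
    have h : P.map (Tr.map (fpowMap Tl f n)) ≫ i.app (fpow Tl n X') =
        i.app (fpow Tl n X) ≫ P.map (Tl.map (fpowMap Tl f n)) := by
      simpa using i.naturality (fpowMap Tl f n)
    erw [h, ← Category.assoc, fpowMap_succ]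
    rfl

end Stmt12
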